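/- Let s = (q^m - 1)(p^d - 1)/((Q - 1)(q - 1)), which is a positive integer. Let a ∈ GF(Q)* with A_m(a) = 0 and let x_0 in the algebraic closure of GF(p) satisfy F_1(x_0) = 0. Then F_1(x_0^s) = 0 and (x_0^s)^{q-1} ∈ GF(Q). -/

import Mathlib

open Polynomial Finset

private lemma stmt17_sum_reindex (t : ℤ) (K m : ℕ) (hK : 0 < K) (hco : Nat.Coprime m K) :
    ∑ i ∈ range K, t ^ ((m * i) % K) = ∑ j ∈ range K, t ^ j := by
  have hinj : Set.InjOn (fun i => (m * i) % K) (range K) := by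
    intro i hi j hj hij
    simp only [mem_coe, mem_range] at hi hj
    have h1 : m * i ≡ m * j [MOD K] := by
      unfold Nat.ModEq
      simpa using hij
    have h2 : i ≡ j [MOD K] := Nat.ModEq.cancel_left_of_coprime hco.symm h1
    have h3 := h2
    unfold Nat.ModEq at h3
    rwa [Nat.mod_eq_of_lt hi, Nat.mod_eq_of_lt hj] at h3
  have himg : (range K).image (fun i => (m * i) % K) = range K := by
    apply Finset.eq_of_subset_of_card_le
    · intro x hx
      simp only [mem_image, mem_range] at hx ⊢
      obtain ⟨i, _, rfl⟩ := hx
      exact Nat.mod_lt _ hK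
    · rw [Finset.card_image_of_injOn hinj]
  conv_rhs => rw [← himg]
  rw [Finset.sum_image (fun i hi j hj h => hinj (by simpa using hi) (by simpa using hj) h)]

private lemma stmt17_nt (t K m s : ℕ) (ht : 2 ≤ t) (hK : 0 < K) (hm : 0 < m)
    (hco : Nat.Coprime m K)
    (hs : s * ((t ^ m - 1) * (t ^ K - 1)) = (t ^ (K * m) - 1) * (t - 1)) :
    1 ≤ s ∧ (t - 1) ∣ (s - 1) := by
  have h1 : 1 ≤ t ^ m := Nat.one_le_pow _ _ (by omega)
  have h2 : 1 ≤ t ^ K := Nat.one_le_pow _ _ (by omega)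
  have h3 : 1 ≤ t ^ (K * m) := Nat.one_le_pow _ _ (by omega)
  have h4 : 1 ≤ t := by omega
  have h5 : 1 < t ^ m := Nat.one_lt_pow (by omega) (by omega)
  have h6 : 1 < t ^ (K * m) := Nat.one_lt_pow (by positivity) (by omega)
  have h7 : 1 < t ^ K := Nat.one_lt_pow (by omega) (by omega)
  have hs1 : 1 ≤ s := by
    rcases Nat.eq_zero_or_pos s with rfl | h
    · exfalso
      simp only [zero_mul] at hs
      have : 0 < (t ^ (K * m) - 1) * (t - 1) := Nat.mul_pos (by omega) (by omega)
      omega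
    · exact h
  refine ⟨hs1, ?_⟩
  zify [h1, h2, h3, h4] at hs
  set T : ℤ := (t : ℤ) with hT
  set V : ℤ := ∑ i ∈ range K, T ^ i with hV
  set U : ℤ := ∑ i ∈ range K, (T ^ m) ^ i with hU
  have hVK : V * (T - 1) = T ^ K - 1 := geom_sum_mul T K
  have hUm : U * (T ^ m - 1) = T ^ (K * m) - 1 := by
    rw [hU, geom_sum_mul, ← pow_mul, mul_comm m K]
  have hT2 : (2 : ℤ) ≤ T := by simp only [hT]; exact_mod_cast ht
  have hT1 : (T - 1) ≠ 0 := by omega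
  have hTm1 : (T ^ m - 1 : ℤ) ≠ 0 := by
    have : (1 : ℤ) < T ^ m := one_lt_pow₀ (by omega) (by omega)
    omega
  have hSV : (s : ℤ) * V = U := by
    have hz : ((s : ℤ) * V - U) * ((T ^ m - 1) * (T - 1)) = 0 := by
      rw [sub_mul,
        show (s : ℤ) * V * ((T ^ m - 1) * (T - 1)) = (s : ℤ) * ((T ^ m - 1) * (V * (T - 1))) by
          ring,
        hVK,
        show U * ((T ^ m - 1) * (T - 1)) = (U * (T ^ m - 1)) * (T - 1) by ring, hUm, hs]
      ring
    have hne : ((T ^ m - 1) * (T - 1)) ≠ 0 := mul_ne_zero hTm1 hT1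
    have := (mul_eq_zero.mp hz).resolve_right hne
    linarith
  have hdvd : (T ^ K - 1) ∣ (U - V) := by
    have hmid : U - V = ∑ i ∈ range K, ((T ^ m) ^ i - T ^ ((m * i) % K)) := by
      rw [Finset.sum_sub_distrib, ← hU]
      congr 1
      rw [stmt17_sum_reindex T K m hK hco, hV]
    rw [hmid]
    apply Finset.dvd_sum
    intro i _
    have hsplit : (T ^ m) ^ i = (T ^ K) ^ (m * i / K) * T ^ ((m * i) % K) := by
      rw [← pow_mul]
      have hmi : m * i = K * (m * i / K) + (m * i) % K := by
        have := Nat.div_add_mod (m * i) K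
        omega
      conv_lhs => rw [hmi]
      rw [pow_add, pow_mul]
    rw [hsplit]
    have hd1 : (T ^ K - 1) ∣ (T ^ K) ^ (m * i / K) - 1 := by
      simpa using sub_dvd_pow_sub_pow (T ^ K) 1 (m * i / K)
    obtain ⟨c, hc⟩ := hd1
    refine ⟨c * T ^ ((m * i) % K), ?_⟩
    rw [show (T ^ K) ^ (m * i / K) * T ^ ((m * i) % K) - T ^ ((m * i) % K)
        = ((T ^ K) ^ (m * i / K) - 1) * T ^ ((m * i) % K) by ring, hc]
    ring
  have hVpos : 0 < V := by
    have hmem : (0 : ℕ) ∈ range K := mem_range.mpr hK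
    have hle : (T : ℤ) ^ 0 ≤ V := by
      apply Finset.single_le_sum (f := fun i => T ^ i) _ hmem
      intro i _
      positivity
    simpa using hle.trans_lt' (by norm_num)
  obtain ⟨c, hc⟩ := hdvd
  have hfinal : ((s : ℤ) - 1) * V = ((T - 1) * c) * V := by
    have hh : (s : ℤ) * V - V = (T ^ K - 1) * c := by rw [hSV]; exact hc
    rw [← hVK] at hh
    rw [sub_mul, one_mul, hh]
    ring
  have hc2 : (s : ℤ) - 1 = (T - 1) * c := mul_right_cancel₀ (by omega) hfinal
  have hfin : ((t - 1 : ℕ) : ℤ) ∣ ((s - 1 : ℕ) : ℤ) := by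
    rw [Nat.cast_sub hs1, Nat.cast_sub h4]
    exact ⟨c, hc2⟩
  exact_mod_cast hfin

private lemma stmt17_pow_mul_fix {F : Type*} [Monoid F] (B : F) (p i : ℕ)
    (h : B ^ p ^ i = B) : ∀ c, B ^ p ^ (i * c) = B := by
  intro c
  induction c with
  | zero => simp
  | succ c ih =>
    have : p ^ (i * (c + 1)) = p ^ (i * c) * p ^ i := by rw [← pow_add]; ring_nf
    rw [this, pow_mul, ih, h]

private lemma stmt17_gcd_fix {F : Type*} [Monoid F] (B : F) (p : ℕ) :
    ∀ i j, B ^ p ^ i = B → B ^ p ^ j = B → B ^ p ^ (Nat.gcd i j) = B := by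
  intro i j
  induction i, j using Nat.gcd.induction with
  | H0 j => intro _ h; simpa [Nat.gcd_zero_left] using h
  | H1 i j hi ih =>
    intro h1 h2
    rw [Nat.gcd_rec]
    apply ih _ h1
    -- show B ^ p ^ (j % i) = B
    have hj : j = i * (j / i) + j % i := by
      have := Nat.div_add_mod j i; omega
    have hmul := stmt17_pow_mul_fix B p i h1 (j / i)
    calc B ^ p ^ (j % i) = (B ^ p ^ (i * (j / i))) ^ p ^ (j % i) := by rw [hmul]
    _ = B ^ (p ^ (i * (j / i)) * p ^ (j % i)) := (pow_mul _ _ _).symm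
    _ = B ^ p ^ j := by rw [← pow_add, ← hj]
    _ = B := h2

open Polynomial

private lemma stmt17_aeval_pow {p : ℕ} [Fact p.Prime] {F : Type*} [Field F]
    [Algebra (ZMod p) F] [CharP F p] (N : ℕ) (a : F)
    (ha : a ^ p ^ N = a) (f : Polynomial (ZMod p)) :
    (aeval a f) ^ p ^ N = aeval a f := by
  have key : ∀ g : Polynomial (ZMod p), (aeval a g) ^ p ^ N = aeval (a ^ p ^ N) g := by
    intro g
    induction g using Polynomial.induction_on' with
    | add f g hf hg =>
      rw [map_add, map_add, add_pow_char_pow, hf, hg]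
    | monomial i c =>
      rw [aeval_monomial, aeval_monomial, mul_pow, ← map_pow, ZMod.pow_card_pow,
        pow_right_comm]
  rw [key, ha]

private lemma stmt17_field {p : ℕ} [Fact p.Prime] {F : Type*} [Field F]
    [Algebra (ZMod p) F] [IsAlgClosed F] [CharP F p]
    (k : ℕ) (hk : 1 ≤ k) (q : ℕ) (hqdef : q = p ^ k)
    (A : ℕ → Polynomial (ZMod p)) (hA1 : A 1 = 1) (hA2 : A 2 = -1)
    (hA : ∀ r : ℕ, 1 ≤ r → A (r + 2) = -(A (r + 1)) ^ q - X ^ q * A r ^ q ^ 2)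
    (a : F) (ha0 : a ≠ 0)
    (B : ℕ → F) (hB1 : B 1 = 0)
    (hB : ∀ r : ℕ, 1 ≤ r → B (r + 1) = -a * (aeval a (A r)) ^ q)
    (m : ℕ) (hm2 : 2 ≤ m) (hma : aeval a (A m) = 0) :
    B m ≠ 0 ∧ (B m) ^ q = B m := by
  classical
  have hp : p.Prime := Fact.out
  have hq2 : 2 ≤ q := by
    rw [hqdef]
    calc 2 ≤ p := hp.two_le
    _ = p ^ 1 := (pow_one p).symm
    _ ≤ p ^ k := Nat.pow_le_pow_right hp.pos hk
  have hq0 : q ≠ 0 := by omega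
  have hnegpow : ∀ z : F, (-z) ^ q = -(z ^ q) := by
    intro z
    have h := sub_pow_char_pow (R := F) (x := (0 : F)) (y := z) (p := p) (n := k)
    rw [← hqdef] at h
    simpa [zero_pow hq0] using h
  have hqpow : ∀ (z : F) (j : ℕ), z ^ q ^ j = z ^ p ^ (k * j) := by
    intro z j
    rw [hqdef, ← pow_mul]
  have haddpow : ∀ z1 z2 : F, (z1 + z2) ^ q = z1 ^ q + z2 ^ q := by
    intro z1 z2
    have h := add_pow_char_pow (R := F) (x := z1) (y := z2) (p := p) (n := k)
    rwa [← hqdef] at h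
  have hsubpow : ∀ z1 z2 : F, (z1 - z2) ^ q = z1 ^ q - z2 ^ q := by
    intro z1 z2
    have h := sub_pow_char_pow (R := F) (x := z1) (y := z2) (p := p) (n := k)
    rwa [← hqdef] at h
  have haddpowM : ∀ (z1 z2 : F) (j : ℕ), (z1 + z2) ^ q ^ j = z1 ^ q ^ j + z2 ^ q ^ j := by
    intro z1 z2 j
    rw [hqpow, hqpow, hqpow, add_pow_char_pow]
  have hsubpowM : ∀ (z1 z2 : F) (j : ℕ), (z1 - z2) ^ q ^ j = z1 ^ q ^ j - z2 ^ q ^ j := by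
    intro z1 z2 j
    rw [hqpow, hqpow, hqpow, sub_pow_char_pow]
  have hnegpowM : ∀ (z : F) (j : ℕ), (-z) ^ q ^ j = -(z ^ q ^ j) := by
    intro z j
    have h := hsubpowM 0 z j
    simpa [zero_pow (pow_ne_zero j hq0)] using h
  have hinj : ∀ z1 z2 : F, z1 ^ q = z2 ^ q → z1 = z2 := by
    intro z1 z2 h
    have h2 : (z1 - z2) ^ q = 0 := by rw [hsubpow, h, sub_self]
    exact sub_eq_zero.mp (pow_eq_zero_iff hq0 |>.mp h2)
  have hpow2 : ∀ z : F, (z ^ q) ^ q = z ^ q ^ 2 := by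
    intro z; rw [← pow_mul, sq]
  -- evaluated recursion
  have hrec : ∀ r, 1 ≤ r → aeval a (A (r + 2)) =
      -(aeval a (A (r + 1))) ^ q - a ^ q * (aeval a (A r)) ^ q ^ 2 := by
    intro r hr
    rw [hA r hr]
    simp [map_sub, map_neg, map_pow, map_mul, aeval_X]
  -- not both zero
  have hnz : ∀ j, ¬(aeval a (A (j + 1)) = 0 ∧ aeval a (A (j + 2)) = 0) := by
    intro j
    induction j with
    | zero => simp [hA1]
    | succ j ih =>
      rintro ⟨h2, h3⟩
      apply ih
      refine ⟨?_, h2⟩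
      have h := hrec (j + 1) (by omega)
      rw [h2, h3] at h
      simp only [zero_pow hq0, neg_zero, zero_sub] at h
      have h4 : a ^ q * (aeval a (A (j + 1))) ^ q ^ 2 = 0 := neg_eq_zero.mp h.symm
      rcases mul_eq_zero.mp h4 with h5 | h5
      · exact absurd h5 (pow_ne_zero _ ha0)
      · exact pow_eq_zero_iff (by positivity) |>.mp h5
  -- A_{r+1} = B_r^q - A_r^q
  have hF' : ∀ r, 1 ≤ r → aeval a (A (r + 1)) = (B r) ^ q - (aeval a (A r)) ^ q := by
    intro r hr
    match r, hr with
    | 1, _ =>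
      rw [hA2, hA1, hB1]
      simp [zero_pow hq0]
    | (r + 2), _ =>
      have hb : B (r + 2) = -a * (aeval a (A (r + 1))) ^ q := hB (r + 1) (by omega)
      have hb2 : (B (r + 2)) ^ q = -(a ^ q * (aeval a (A (r + 1))) ^ q ^ 2) := by
        rw [hb, neg_mul, hnegpow, mul_pow, hpow2]
      have h := hrec (r + 1) (by omega)
      rw [show r + 1 + 2 = r + 2 + 1 from rfl, show r + 1 + 1 = r + 2 from rfl] at h
      rw [h, hb2]
      ring
  -- key identity on roots of L
  have hkey : ∀ v : F, v ^ q ^ 2 + v ^ q + a * v = 0 → ∀ r, 1 ≤ r →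
      v ^ q ^ r = aeval a (A r) * v ^ q + B r * v := by
    intro v hv r hr
    induction r, hr using Nat.le_induction with
    | base =>
      rw [pow_one q, hA1, hB1]
      simp
    | succ r hr ih =>
      have h1 : v ^ q ^ (r + 1) = (v ^ q ^ r) ^ q := by
        rw [← pow_mul, pow_succ q r]
      rw [h1, ih, haddpow, mul_pow, mul_pow, hpow2]
      have hv2 : v ^ q ^ 2 = -(v ^ q) - a * v := by linear_combination hv
      rw [hv2, hF' r hr, hB r hr]
      ring
  -- B m nonzero
  obtain ⟨m', rfl⟩ : ∃ m', m = m' + 2 := ⟨m - 2, by omega⟩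
  have hBm : B (m' + 2) = -a * (aeval a (A (m' + 1))) ^ q := hB (m' + 1) (by omega)
  have ham1 : aeval a (A (m' + 1)) ≠ 0 := fun hcon => hnz m' ⟨hcon, hma⟩
  have hBne : B (m' + 2) ≠ 0 := by
    rw [hBm]
    exact mul_ne_zero (neg_ne_zero.mpr ha0) (pow_ne_zero _ ham1)
  refine ⟨hBne, ?_⟩
  -- the polynomial L
  obtain ⟨L, hL⟩ : ∃ L : F[X], L = X ^ q ^ 2 + X ^ q + C a * X := ⟨_, rfl⟩
  have hq2lt : q < q ^ 2 := by nlinarith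
  have hdeg_small : (X ^ q + C a * X : F[X]).natDegree < q ^ 2 := by
    apply lt_of_le_of_lt (natDegree_add_le _ _)
    apply max_lt
    · rw [natDegree_X_pow]; exact hq2lt
    · apply lt_of_le_of_lt (natDegree_C_mul_le _ _)
      rw [natDegree_X]
      omega
  have hdegL : L.natDegree = q ^ 2 := by
    rw [hL, add_assoc]
    rw [natDegree_add_eq_left_of_natDegree_lt (by rw [natDegree_X_pow]; exact hdeg_small)]
    exact natDegree_X_pow _
  have hL0 : L ≠ 0 := by
    intro h
    rw [h, natDegree_zero] at hdegL
    omega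
  have hcast_q : ((q : ℕ) : F) = 0 := by
    have : (p : ℕ) ∣ q := by rw [hqdef]; exact dvd_pow_self p (by omega)
    exact_mod_cast (CharP.cast_eq_zero_iff F p q).mpr this
  have hcast_q2 : ((q ^ 2 : ℕ) : F) = 0 := by
    have : (p : ℕ) ∣ q ^ 2 := by
      rw [hqdef]
      exact dvd_pow (dvd_pow_self p (by omega)) (by omega)
    exact_mod_cast (CharP.cast_eq_zero_iff F p (q ^ 2)).mpr this
  have hderiv : derivative L = C a := by
    rw [hL]
    rw [derivative_add, derivative_add, derivative_X_pow, derivative_X_pow,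
      derivative_C_mul, derivative_X]
    rw [hcast_q, hcast_q2]
    simp
  have hsep : L.Separable := by
    rw [Polynomial.separable_def, hderiv]
    exact ⟨0, C a⁻¹, by rw [zero_mul, zero_add, ← C_mul, inv_mul_cancel₀ ha0, C_1]⟩
  have hsplits : L.Splits := IsAlgClosed.splits L
  have hcard : Multiset.card L.roots = q ^ 2 := by
    rw [← hdegL]
    exact (Polynomial.splits_iff_card_roots.mp hsplits)
  have hnodup : L.roots.Nodup := Polynomial.nodup_roots hsep
  have hcardRL : L.roots.toFinset.card = q ^ 2 := by
    rw [Multiset.toFinset_card_of_nodup hnodup, hcard]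
  have hroot_eq : ∀ z : F, z ∈ L.roots.toFinset → z ^ q ^ 2 + z ^ q + a * z = 0 := by
    intro z hz
    have hmem := Multiset.mem_toFinset.mp hz
    have h := (Polynomial.mem_roots'.mp hmem).2
    rw [Polynomial.IsRoot, hL] at h
    simpa [eval_add, eval_mul, eval_pow, eval_C, eval_X] using h
  -- pick x
  have hq2n4 : 4 ≤ q ^ 2 := by nlinarith
  obtain ⟨x, hxRL, hxne0⟩ : ∃ x ∈ L.roots.toFinset, x ≠ 0 := by
    have hns : ¬(L.roots.toFinset ⊆ {(0 : F)}) := by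
      intro hsub
      have h := Finset.card_le_card hsub
      rw [hcardRL, Finset.card_singleton] at h
      omega
    obtain ⟨x, hxRL, hx0⟩ := Finset.not_subset.mp hns
    exact ⟨x, hxRL, by simpa using hx0⟩
  have hxroot := hroot_eq x hxRL
  -- pick y
  obtain ⟨M0, hM0⟩ : ∃ M0 : F[X], M0 = X ^ q - X := ⟨_, rfl⟩
  have hM0ne : M0 ≠ 0 := by
    intro h
    have hco : M0.coeff q = 1 := by
      rw [hM0, coeff_sub, coeff_X_pow, coeff_X]
      simp [show ¬(1 = q) from by omega, show ¬(q = 1) from by omega]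
    rw [h, coeff_zero] at hco
    exact one_ne_zero hco.symm
  have hM0deg : M0.natDegree ≤ q := by
    rw [hM0]
    calc (X ^ q - X : F[X]).natDegree ≤ max (X ^ q : F[X]).natDegree (X : F[X]).natDegree :=
          natDegree_sub_le _ _
    _ ≤ q := by rw [natDegree_X_pow, natDegree_X]; omega
  have hTcard : ((M0.roots.toFinset).image (· * x)).card < L.roots.toFinset.card := by
    calc ((M0.roots.toFinset).image (· * x)).card ≤ M0.roots.toFinset.card :=
          Finset.card_image_le
    _ ≤ Multiset.card M0.roots := Multiset.toFinset_card_le _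
    _ ≤ M0.natDegree := Polynomial.card_roots' M0
    _ ≤ q := hM0deg
    _ < q ^ 2 := hq2lt
    _ = L.roots.toFinset.card := hcardRL.symm
  obtain ⟨y, hyRL, hyT⟩ : ∃ y ∈ L.roots.toFinset, y ∉ (M0.roots.toFinset).image (· * x) := by
    exact Finset.not_subset.mp fun hsub => absurd (Finset.card_le_card hsub) (by omega)
  have hyroot := hroot_eq y hyRL
  -- w = y/x not in GF(q)
  have hwq : (y / x) ^ q ≠ y / x := by
    intro hcon
    apply hyT
    refine Finset.mem_image.mpr ⟨y / x, ?_, div_mul_cancel₀ y hxne0⟩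
    rw [Multiset.mem_toFinset]
    refine Polynomial.mem_roots'.mpr ⟨hM0ne, ?_⟩
    rw [Polynomial.IsRoot, hM0]
    simp [eval_sub, eval_pow, eval_X, hcon]
  -- D and u
  obtain ⟨D, hD⟩ : ∃ D : F, D = y ^ q * x - y * x ^ q := ⟨_, rfl⟩
  have hx2 : x ^ q ^ 2 = -(x ^ q) - a * x := by linear_combination hxroot
  have hy2 : y ^ q ^ 2 = -(y ^ q) - a * y := by linear_combination hyroot
  have hDq : D ^ q = a * D := by
    rw [hD, hsubpow, mul_pow, mul_pow, hpow2, hpow2, hx2, hy2]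
    ring
  obtain ⟨u, hu⟩ : ∃ u : F, u = D / (x ^ q * x) := ⟨_, rfl⟩
  have hxq_ne : x ^ q ≠ 0 := pow_ne_zero _ hxne0
  have hxq2_ne : x ^ q ^ 2 ≠ 0 := pow_ne_zero _ hxne0
  have hu_alt : u = (y / x) ^ q - y / x := by
    rw [hu, hD, div_pow]
    field_simp
  have hu0 : u ≠ 0 := by
    rw [hu_alt]
    exact sub_ne_zero.mpr hwq
  -- q^m powers
  have hxqm : x ^ q ^ (m' + 2) = B (m' + 2) * x := by
    have h := hkey x hxroot (m' + 2) (by omega)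
    rw [hma] at h
    simpa using h
  have hyqm : y ^ q ^ (m' + 2) = B (m' + 2) * y := by
    have h := hkey y hyroot (m' + 2) (by omega)
    rw [hma] at h
    simpa using h
  have hw_fix : (y / x) ^ q ^ (m' + 2) = y / x := by
    rw [div_pow, hxqm, hyqm, mul_div_mul_left _ _ hBne]
  have hu_fix : u ^ q ^ (m' + 2) = u := by
    rw [hu_alt, hsubpowM, pow_right_comm, hw_fix]
  -- key equation
  have huq : u ^ q = (a * D) / (x ^ q ^ 2 * x ^ q) := by
    rw [hu, div_pow, hDq, mul_pow, hpow2]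
  have hkeyeq : x ^ q ^ 2 * (u ^ q + u) = -(x ^ q * u) := by
    rw [huq, hu, hx2]
    have hden : -(x ^ q) - a * x ≠ 0 := by rw [← hx2]; exact hxq2_ne
    field_simp
    ring
  have huu_ne : u ^ q + u ≠ 0 := by
    intro hcon
    rw [hcon, mul_zero] at hkeyeq
    have h : x ^ q * u = 0 := by linear_combination hkeyeq
    rcases mul_eq_zero.mp h with h | h
    · exact hxq_ne h
    · exact hu0 h
  -- z := x^{q^2}/x^q is fixed by the q^(m'+2) power map
  have hz_eq : x ^ q ^ 2 / x ^ q = -(u / (u ^ q + u)) := by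
    field_simp
    linear_combination hkeyeq
  have huu_fix : (u ^ q + u) ^ q ^ (m' + 2) = u ^ q + u := by
    rw [haddpowM, pow_right_comm, hu_fix]
  have hz_fix : (x ^ q ^ 2 / x ^ q) ^ q ^ (m' + 2) = x ^ q ^ 2 / x ^ q := by
    rw [hz_eq, hnegpowM, div_pow, hu_fix, huu_fix]
  have hz_lhs : (x ^ q ^ 2 / x ^ q) ^ q ^ (m' + 2) =
      (B (m' + 2) ^ q ^ 2 * x ^ q ^ 2) / (B (m' + 2) ^ q * x ^ q) := by
    rw [div_pow, pow_right_comm x (q ^ 2), pow_right_comm x q, hxqm, mul_pow, mul_pow]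
  have hBq2 : B (m' + 2) ^ q ^ 2 = B (m' + 2) ^ q := by
    rw [hz_lhs] at hz_fix
    rw [div_eq_div_iff (mul_ne_zero (pow_ne_zero _ hBne) hxq_ne) hxq_ne] at hz_fix
    have h2 : B (m' + 2) ^ q ^ 2 * (x ^ q ^ 2 * x ^ q) =
        B (m' + 2) ^ q * (x ^ q ^ 2 * x ^ q) := by
      linear_combination hz_fix
    exact mul_right_cancel₀ (mul_ne_zero hxq2_ne hxq_ne) h2
  have hfin : (B (m' + 2) ^ q) ^ q = (B (m' + 2)) ^ q := by
    rw [hpow2, hBq2]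
  exact hinj _ _ hfin

open Polynomial

theorem stmt_17 (p k n : ℕ) [Fact p.Prime] (hk : 1 ≤ k) (hn : 1 ≤ n)
    (d m q Q : ℕ) (hd : d = Nat.gcd n k) (hm : m = n / d)
    (hq : q = p ^ k) (hQ : Q = p ^ n)
    (s : ℕ) (hs : s * ((Q - 1) * (q - 1)) = (q ^ m - 1) * (p ^ d - 1))
    (A : ℕ → Polynomial (ZMod p)) (hA1 : A 1 = 1) (hA2 : A 2 = -1)
    (hA : ∀ r : ℕ, 1 ≤ r → A (r + 2) = -(A (r + 1)) ^ q - X ^ q * A r ^ q ^ 2)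
    (a : AlgebraicClosure (ZMod p)) (haQ : a ^ Q = a) (ha0 : a ≠ 0)
    (B : ℕ → AlgebraicClosure (ZMod p)) (hB1 : B 1 = 0)
    (hB : ∀ r : ℕ, 1 ≤ r → B (r + 1) = -a * (aeval a (A r)) ^ q)
    (hma : aeval a (A m) = 0)
    (x0 : AlgebraicClosure (ZMod p))
    (hx0 : x0 ^ q ^ m - B m * x0 = 0) :
    (x0 ^ s) ^ q ^ m - B m * x0 ^ s = 0 ∧
      ((x0 ^ s) ^ (q - 1)) ^ Q = (x0 ^ s) ^ (q - 1) := by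
  subst hq hQ
  have hp : p.Prime := Fact.out
  have hp2 : 2 ≤ p := hp.two_le
  have hd1 : 0 < d := by
    rw [hd]
    exact Nat.gcd_pos_of_pos_left k hn
  have hdn : d ∣ n := by rw [hd]; exact Nat.gcd_dvd_left n k
  have hdk : d ∣ k := by rw [hd]; exact Nat.gcd_dvd_right n k
  have hm1 : 0 < m := by
    rw [hm]
    exact Nat.div_pos (Nat.le_of_dvd (by omega) hdn) hd1
  have hK1 : 0 < k / d := Nat.div_pos (Nat.le_of_dvd (by omega) hdk) hd1
  have hndm : n = d * m := by rw [hm]; exact (Nat.mul_div_cancel' hdn).symm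
  have hkdK : k = d * (k / d) := (Nat.mul_div_cancel' hdk).symm
  have hco : Nat.Coprime m (k / d) := by
    rw [hm, hd]
    exact Nat.coprime_div_gcd_div_gcd (by rw [← hd]; exact hd1)
  have hpd2 : 2 ≤ p ^ d :=
    calc 2 ≤ p := hp2
    _ = p ^ 1 := (pow_one p).symm
    _ ≤ p ^ d := Nat.pow_le_pow_right hp.pos hd1
  have hq2 : 2 ≤ p ^ k :=
    calc 2 ≤ p := hp2
    _ = p ^ 1 := (pow_one p).symm
    _ ≤ p ^ k := Nat.pow_le_pow_right hp.pos hk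
  have hQ2 : 2 ≤ p ^ n :=
    calc 2 ≤ p := hp2
    _ = p ^ 1 := (pow_one p).symm
    _ ≤ p ^ n := Nat.pow_le_pow_right hp.pos hn
  have hqm1 : 0 < (p ^ k) ^ m := by positivity
  -- number theory: s ≥ 1 and (p^d - 1) ∣ (s - 1)
  have e1 : (p : ℕ) ^ n = (p ^ d) ^ m := by rw [hndm, pow_mul]
  have e2 : (p : ℕ) ^ k = (p ^ d) ^ (k / d) := by
    conv_lhs => rw [hkdK]
    rw [pow_mul]
  have e3 : ((p : ℕ) ^ k) ^ m = (p ^ d) ^ (k / d * m) := by rw [e2, ← pow_mul]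
  obtain ⟨hs1, hdvd⟩ := stmt17_nt (p ^ d) (k / d) m s hpd2 hK1 hm1 hco
    (by rw [← e1, ← e2, ← e3]; exact hs)
  -- m ≥ 2
  have hm2 : 2 ≤ m := by
    by_contra h
    have : m = 1 := by omega
    rw [this, hA1] at hma
    simp at hma
  -- field facts
  obtain ⟨hBne, hBk⟩ := stmt17_field k hk (p ^ k) rfl A hA1 hA2 hA a ha0 B hB1 hB m hm2 hma
  have hBQ : B m ^ p ^ n = B m := by
    obtain ⟨m', hmm⟩ : ∃ m', m = m' + 2 := ⟨m - 2, by omega⟩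
    have hb : B m = -a * (aeval a (A (m' + 1))) ^ p ^ k := by
      rw [hmm]; exact hB (m' + 1) (by omega)
    have hneg : ∀ z : AlgebraicClosure (ZMod p), (-z) ^ p ^ n = -(z ^ p ^ n) := by
      intro z
      have h := sub_pow_char_pow (x := (0 : AlgebraicClosure (ZMod p))) (y := z)
        (p := p) (n := n)
      simpa [zero_pow (pow_ne_zero n hp.ne_zero)] using h
    rw [hb, neg_mul, hneg, mul_pow, pow_right_comm, stmt17_aeval_pow n a haQ, haQ]
  have hBd : B m ^ p ^ d = B m := by
    have h := stmt17_gcd_fix (B m) p k n hBk hBQ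
    rwa [show Nat.gcd k n = d from by rw [hd, Nat.gcd_comm]] at h
  have hBd1 : B m ^ (p ^ d - 1) = 1 := by
    have h1 : B m ^ (p ^ d - 1) * B m = 1 * B m := by
      rw [one_mul, ← pow_succ, show p ^ d - 1 + 1 = p ^ d from by omega]
      exact hBd
    exact mul_right_cancel₀ hBne h1
  have hBs : B m ^ s = B m := by
    obtain ⟨c, hc⟩ := hdvd
    have hsc : s = (p ^ d - 1) * c + 1 := by omega
    rw [hsc, pow_add, pow_one, pow_mul, hBd1, one_pow, one_mul]
  -- finish
  rcases eq_or_ne x0 0 with rfl | hx0ne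
  · constructor
    · rw [zero_pow (by omega : s ≠ 0), zero_pow (by omega : (p ^ k) ^ m ≠ 0),
        mul_zero, sub_zero]
    · rw [zero_pow (by omega : s ≠ 0), zero_pow (by omega : p ^ k - 1 ≠ 0),
        zero_pow (by omega : p ^ n ≠ 0)]
  · have hx0qm : x0 ^ (p ^ k) ^ m = B m * x0 := by linear_combination hx0
    constructor
    · have h : (x0 ^ s) ^ (p ^ k) ^ m = B m * x0 ^ s := by
        rw [pow_right_comm, hx0qm, mul_pow, hBs]
      rw [h, sub_self]
    · have hB_x : x0 ^ ((p ^ k) ^ m - 1) = B m := by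
        have h1 : x0 ^ ((p ^ k) ^ m - 1) * x0 = B m * x0 := by
          rw [← pow_succ, show (p ^ k) ^ m - 1 + 1 = (p ^ k) ^ m from by omega]
          exact hx0qm
        exact mul_right_cancel₀ hx0ne h1
      have hexp : s * ((p ^ k - 1) * (p ^ n - 1)) = ((p ^ k) ^ m - 1) * (p ^ d - 1) := by
        rw [← hs]; ring
      have hX1 : ((x0 ^ s) ^ (p ^ k - 1)) ^ (p ^ n - 1) = 1 := by
        rw [← pow_mul, ← pow_mul, hexp, pow_mul, hB_x, hBd1]
      calc ((x0 ^ s) ^ (p ^ k - 1)) ^ p ^ n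
          = ((x0 ^ s) ^ (p ^ k - 1)) ^ (p ^ n - 1) * ((x0 ^ s) ^ (p ^ k - 1)) := by
            rw [← pow_succ, show p ^ n - 1 + 1 = p ^ n from by omega]
      _ = (x0 ^ s) ^ (p ^ k - 1) := by rw [hX1, one_mul]
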